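/- Fix 0 < p < 1 with 1/2 < p. Let f(x) = (1 - x^p)^(1/p). Then f''' vanishes at exactly one point of (0,1), namely at x = ((2-p)/(1+p))^(1/p). -/

import Mathlib

open Real Set

theorem stmt6 (p : ℝ) (hp0 : 1 / 2 < p) (hp1 : p < 1)
    (f : ℝ → ℝ) (hf : ∀ x, f x = (1 - x ^ p) ^ (1 / p)) :
    ((2 - p) / (1 + p)) ^ (1 / p) ∈ Set.Ioo (0:ℝ) 1 ∧
    ∀ x ∈ Set.Ioo (0:ℝ) 1,
      (deriv (deriv (deriv f)) x = 0 ↔ x = ((2 - p) / (1 + p)) ^ (1 / p)) := by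
  have hp : (0:ℝ) < p := by linarith
  have hp' : p ≠ 0 := hp.ne'
  set F1 : ℝ → ℝ := fun x => -(x ^ (p-1) * (1 - x ^ p) ^ (1/p - 1)) with hF1
  set F2 : ℝ → ℝ := fun x => (1-p) * (x ^ (p-2) * (1 - x ^ p) ^ (1/p - 2)) with hF2
  set F3 : ℝ → ℝ := fun x =>
    (1-p) * (x ^ (p-3) * (1 - x ^ p) ^ (1/p - 3)) * ((p-2) + (1+p) * x ^ p) with hF3
  -- basic facts on Ioo
  have key : ∀ x ∈ Ioo (0:ℝ) 1,
      HasDerivAt f (F1 x) x ∧ HasDerivAt F1 (F2 x) x ∧ HasDerivAt F2 (F3 x) x := by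
    intro x hx
    obtain ⟨hx0, hx1⟩ := hx
    have hxp1 : x ^ p < 1 := Real.rpow_lt_one hx0.le hx1 hp
    have hu : 0 < 1 - x ^ p := by linarith
    have hu' : (1 - x ^ p) ≠ 0 := hu.ne'
    have hg : HasDerivAt (fun y : ℝ => 1 - y ^ p) (-(p * x ^ (p-1))) x := by
      exact (Real.hasDerivAt_rpow_const (p := p) (Or.inl hx0.ne')).const_sub 1
    -- rpow_add identities
    have e1 : x ^ (p-1) = x ^ (p-2) * x := by
      rw [show p - 1 = (p-2) + 1 by ring, Real.rpow_add hx0, Real.rpow_one]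
    have e2 : x ^ (p-1) * x ^ (p-1) = x ^ (p-2) * x ^ p := by
      rw [← Real.rpow_add hx0, ← Real.rpow_add hx0, show p-1+(p-1) = p-2+p by ring]
    have e1' : x ^ (p-2) = x ^ (p-3) * x := by
      rw [show p - 2 = (p-3) + 1 by ring, Real.rpow_add hx0, Real.rpow_one]
    have e2' : x ^ (p-2) * x ^ (p-1) = x ^ (p-3) * x ^ p := by
      rw [← Real.rpow_add hx0, ← Real.rpow_add hx0, show p-2+(p-1) = p-3+p by ring]
    have u1 : (1 - x ^ p) ^ (1/p-1) = (1 - x ^ p) ^ (1/p-2) * (1 - x ^ p) := by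
      rw [show 1/p - 1 = (1/p-2) + 1 by ring, Real.rpow_add hu, Real.rpow_one]
    have u2 : (1 - x ^ p) ^ (1/p-2) = (1 - x ^ p) ^ (1/p-3) * (1 - x ^ p) := by
      rw [show 1/p - 2 = (1/p-3) + 1 by ring, Real.rpow_add hu, Real.rpow_one]
    have hq : p * (1/p - 1) = 1 - p := by
      rw [mul_sub, mul_one_div, div_self hp']; ring
    have hq2 : p * (1/p - 2) = 1 - 2*p := by
      rw [mul_sub, mul_one_div, div_self hp']; ring
    refine ⟨?_, ?_, ?_⟩
    · have h : HasDerivAt (fun y : ℝ => (1 - y ^ p) ^ (1/p))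
          (-(p * x ^ (p-1)) * (1/p) * (1 - x ^ p) ^ (1/p - 1)) x :=
        hg.rpow_const (Or.inl hu')
      have hfeq : f = fun y : ℝ => (1 - y ^ p) ^ (1/p) := funext hf
      rw [hfeq]
      convert h using 1
      rw [hF1]
      field_simp
    · have hpow : HasDerivAt (fun y : ℝ => y ^ (p-1)) ((p-1) * x ^ (p-2)) x := by
        have := Real.hasDerivAt_rpow_const (x := x) (p := p-1) (Or.inl hx0.ne')
        simpa [show p - 1 - 1 = p - 2 by ring] using this
      have hpow2 : HasDerivAt (fun y : ℝ => (1 - y ^ p) ^ (1/p-1))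
          (-(p * x ^ (p-1)) * (1/p-1) * (1 - x ^ p) ^ (1/p - 1 - 1)) x :=
        hg.rpow_const (Or.inl hu')
      have h := (hpow.mul hpow2).neg
      refine h.congr_deriv (Eq.symm ?_)
      rw [hF2, show 1/p - 1 - 1 = 1/p - 2 by ring]
      rw [u1]
      simp only []
      linear_combination (-(x^(p-1) * x^(p-1) * (1 - x ^ p) ^ (1/p-2))) * hq +
        (-((1-p) * (1 - x ^ p) ^ (1/p-2))) * e2
    · have hpow : HasDerivAt (fun y : ℝ => y ^ (p-2)) ((p-2) * x ^ (p-3)) x := by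
        have := Real.hasDerivAt_rpow_const (x := x) (p := p-2) (Or.inl hx0.ne')
        simpa [show p - 2 - 1 = p - 3 by ring] using this
      have hpow2 : HasDerivAt (fun y : ℝ => (1 - y ^ p) ^ (1/p-2))
          (-(p * x ^ (p-1)) * (1/p-2) * (1 - x ^ p) ^ (1/p - 2 - 1)) x :=
        hg.rpow_const (Or.inl hu')
      have h := ((hpow.mul hpow2).const_mul (1-p))
      refine h.congr_deriv (Eq.symm ?_)
      rw [hF3, show 1/p - 2 - 1 = 1/p - 3 by ring]
      rw [u2]
      simp only []
      linear_combination ((1-p) * x^(p-2) * x^(p-1) * (1 - x ^ p) ^ (1/p-3)) * hq2 +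
        ((1-p) * (1-2*p) * (1 - x ^ p) ^ (1/p-3)) * e2'
  have hopen : IsOpen (Ioo (0:ℝ) 1) := isOpen_Ioo
  have hd1 : ∀ x ∈ Ioo (0:ℝ) 1, deriv f x = F1 x := fun x hx =>
    ((key x hx).1).deriv
  have hd2 : ∀ x ∈ Ioo (0:ℝ) 1, deriv (deriv f) x = F2 x := by
    intro x hx
    have hev : deriv f =ᶠ[nhds x] F1 :=
      Filter.eventuallyEq_of_mem (hopen.mem_nhds hx) hd1
    rw [hev.deriv_eq]
    exact ((key x hx).2.1).deriv
  have hd3 : ∀ x ∈ Ioo (0:ℝ) 1, deriv (deriv (deriv f)) x = F3 x := by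
    intro x hx
    have hev : deriv (deriv f) =ᶠ[nhds x] F2 :=
      Filter.eventuallyEq_of_mem (hopen.mem_nhds hx) hd2
    rw [hev.deriv_eq]
    exact ((key x hx).2.2).deriv
  -- the root
  have hc0 : (0:ℝ) < (2 - p) / (1 + p) := by
    apply div_pos <;> linarith
  have hc1 : (2 - p) / (1 + p) < 1 := by
    rw [div_lt_one (by linarith)]; linarith
  have hmem : ((2 - p) / (1 + p)) ^ (1 / p) ∈ Ioo (0:ℝ) 1 :=
    ⟨Real.rpow_pos_of_pos hc0 _, Real.rpow_lt_one hc0.le hc1 (by positivity)⟩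
  refine ⟨hmem, fun x hx => ?_⟩
  obtain ⟨hx0, hx1⟩ := hx
  have hxp1 : x ^ p < 1 := Real.rpow_lt_one hx0.le hx1 hp
  have hu : 0 < 1 - x ^ p := by linarith
  rw [hd3 x ⟨hx0, hx1⟩]
  simp only [hF3]
  have hne : (1-p) * (x ^ (p-3) * (1 - x ^ p) ^ (1/p - 3)) ≠ 0 := by
    have h1 : (0:ℝ) < x ^ (p-3) := Real.rpow_pos_of_pos hx0 _
    have h2 : (0:ℝ) < (1 - x ^ p) ^ (1/p - 3) := Real.rpow_pos_of_pos hu _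
    have : (0:ℝ) < 1 - p := by linarith
    positivity
  constructor
  · intro h
    have h' : (p-2) + (1+p) * x ^ p = 0 := by
      rcases mul_eq_zero.1 h with h | h
      · exact absurd h hne
      · exact h
    have hxp : x ^ p = (2 - p) / (1 + p) := by
      field_simp at h' ⊢
      linarith
    rw [eq_comm, one_div, Real.rpow_inv_eq hc0.le hx0.le hp']
    exact hxp.symm
  · intro h
    have hxp : x ^ p = (2 - p) / (1 + p) := by
      rw [h, one_div, Real.rpow_inv_rpow hc0.le hp']
    rw [hxp]
    have : (p-2) + (1+p) * ((2 - p) / (1 + p)) = 0 := by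
      field_simp
      ring
    rw [this, mul_zero]
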